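/- Let R be a ring in which 2 is invertible, and suppose a - a³ = (a - a³)s(a - a³) for some s ∈ R. Then b = 1 - a is regular; explicitly b = byb where y = 3/2 - b/2 + (1-b)(1-b/2)(2s)(1-b)(1-b/2). -/

import Mathlib

noncomputable section

namespace SepExchange

variable (R : Type) [Ring R]

/-- The right annihilator `r(a)` as a right `R`-submodule of `R`. -/
def rAnn (a : R) : Submodule Rᵐᵒᵖ R where
  carrier := {x | a * x = 0}
  add_mem' := by intro x y hx hy; simp_all [Set.mem_setOf_eq, mul_add]
  zero_mem' := by simp
  smul_mem' := by
    intro c x hx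
    simp only [Set.mem_setOf_eq] at *
    rw [MulOpposite.smul_eq_mul_unop, ← mul_assoc, hx, zero_mul]

/-- The principal right ideal `aR` as a right `R`-submodule of `R`. -/
def rIdeal (a : R) : Submodule Rᵐᵒᵖ R := Submodule.span Rᵐᵒᵖ {a}

/-- The right `R`-module `a·r(a²) = {a*t : a²*t = 0}`. -/
def arAnn2 (a : R) : Submodule Rᵐᵒᵖ R where
  carrier := {x | ∃ t, x = a * t ∧ a ^ 2 * t = 0}
  add_mem' := by
    rintro x y ⟨t1, rfl, h1⟩ ⟨t2, rfl, h2⟩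
    exact ⟨t1 + t2, by rw [mul_add], by rw [mul_add, h1, h2, add_zero]⟩
  zero_mem' := ⟨0, by simp, by simp⟩
  smul_mem' := by
    rintro c x ⟨t, rfl, ht⟩
    refine ⟨t * c.unop, ?_, ?_⟩
    · simp only [MulOpposite.smul_eq_mul_unop, mul_assoc]
    · rw [← mul_assoc, ht, zero_mul]

/-- `R` is an exchange ring: for each `a` there is an idempotent `e ∈ aR`
with `1 - e ∈ (1-a)R`. -/
def ExchangeRing : Prop :=
  ∀ a : R, ∃ e : R, IsIdempotentElem e ∧ (∃ r, e = a * r) ∧ (∃ s, (1 : R) - e = (1 - a) * s)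

/-- `R` is separative: `A⊕A ≅ A⊕B ≅ B⊕B ⟹ A ≅ B` for finitely generated
projective right `R`-modules. -/
def Separative : Prop :=
  ∀ (A B : Type) [AddCommGroup A] [Module Rᵐᵒᵖ A] [AddCommGroup B] [Module Rᵐᵒᵖ B],
    Module.Finite Rᵐᵒᵖ A → Module.Projective Rᵐᵒᵖ A →
    Module.Finite Rᵐᵒᵖ B → Module.Projective Rᵐᵒᵖ B →
    Nonempty ((A × A) ≃ₗ[Rᵐᵒᵖ] (A × B)) → Nonempty ((A × B) ≃ₗ[Rᵐᵒᵖ] (B × B)) →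
    Nonempty (A ≃ₗ[Rᵐᵒᵖ] B)

/-- `a` is unit-regular. -/
def IsUnitRegular (a : R) : Prop := ∃ u : Rˣ, a = a * (u : R) * a

/-- `a` is special clean: there is an idempotent `e` with `a - e` a unit and
`aR ∩ eR = 0`. -/
def IsSpecialClean (a : R) : Prop :=
  ∃ e : R, IsIdempotentElem e ∧ IsUnit (a - e) ∧ rIdeal R a ⊓ rIdeal R e = ⊥

/-- `A ≲⊕ B`: `A` is isomorphic to a direct summand of `B` (right `R`-modules). -/
def SummandOf (A B : Type) [AddCommGroup A] [Module Rᵐᵒᵖ A]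
    [AddCommGroup B] [Module Rᵐᵒᵖ B] : Prop :=
  ∃ N N' : Submodule Rᵐᵒᵖ B, IsCompl N N' ∧ Nonempty (A ≃ₗ[Rᵐᵒᵖ] ↥N)

/-- `A ∝ B`: `A` is isomorphic to a direct summand of a finite direct sum of
copies of `B`. -/
def Propto (A B : Type) [AddCommGroup A] [Module Rᵐᵒᵖ A]
    [AddCommGroup B] [Module Rᵐᵒᵖ B] : Prop :=
  ∃ m : ℕ, 0 < m ∧ SummandOf R A (Fin m → B)

end SepExchange


private theorem aux_reg {R : Type} [Ring R] (a s t : R) (h2 : (2:R) * t = 1)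
    (h2' : t * 2 = 1) (hc : ∀ x : R, t * x = x * t)
    (h : a - a ^ 3 = (a - a ^ 3) * s * (a - a ^ 3)) :
    (1 - a : R) = (1 - a) * ((3 : R) * t - (1 - a) * t +
      (1 - (1 - a)) * (1 - (1 - a) * t) * (2 * s) * (1 - (1 - a)) * (1 - (1 - a) * t)) * (1 - a) := by
  have pull : ∀ x y : R, x * (t * y) = t * (x * y) := fun x y => by
    rw [← mul_assoc, ← hc, mul_assoc]
  have h1 : (1 : R) - (1 - a) * t = t * (1 + a) := by
    have e : t * (1 + a) = t + a * t := by rw [mul_add, mul_one, hc]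
    rw [e]
    nth_rewrite 1 [← h2]
    noncomm_ring
  rw [h1]
  have key : (1 - a) * ((1 - (1 - a)) * (t * (1 + a)) * (2 * s) * (1 - (1 - a)) * (t * (1 + a))) * (1 - a)
      = t * (a - a ^ 3) := by
    have expand : (1 - a) * ((1 - (1 - a)) * (t * (1 + a)) * (2 * s) * (1 - (1 - a)) * (t * (1 + a))) * (1 - a)
        = t * (t * (((1 - a) * (1 - (1 - a)) * (1 + a)) * (2 * s) * ((1 - (1 - a)) * (1 + a) * (1 - a)))) := by
      simp only [mul_assoc]
      simp only [pull]
    rw [expand]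
    have q1 : ((1 - a) * (1 - (1 - a)) * (1 + a) : R) = a - a ^ 3 := by noncomm_ring
    have q2 : ((1 - (1 - a)) * (1 + a) * (1 - a) : R) = a - a ^ 3 := by noncomm_ring
    have q3 : ((a - a ^ 3) * (2 * s) * (a - a ^ 3) : R) = 2 * ((a - a ^ 3) * s * (a - a ^ 3)) := by
      noncomm_ring
    rw [q1, q2, q3, ← h, ← mul_assoc t (2:R) (a - a ^ 3), h2', one_mul]
  have split : (1 - a) * ((3 : R) * t - (1 - a) * t +
        (1 - (1 - a)) * (t * (1 + a)) * (2 * s) * (1 - (1 - a)) * (t * (1 + a))) * (1 - a)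
      = (1 - a) * ((3 : R) * t - (1 - a) * t) * (1 - a)
        + (1 - a) * ((1 - (1 - a)) * (t * (1 + a)) * (2 * s) * (1 - (1 - a)) * (t * (1 + a))) * (1 - a) := by
    noncomm_ring
  rw [split, key]
  have e1 : (1 - a) * ((3 : R) * t - (1 - a) * t) * (1 - a) = ((1 - a) * (2 + a) * (1 - a)) * t := by
    have e0 : ((3 : R) * t - (1 - a) * t) = (2 + a) * t := by noncomm_ring
    rw [e0]
    calc (1 - a) * ((2 + a) * t) * (1 - a) = (1 - a) * (2 + a) * (t * (1 - a)) := by noncomm_ring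
      _ = (1 - a) * (2 + a) * ((1 - a) * t) := by rw [hc]
      _ = ((1 - a) * (2 + a) * (1 - a)) * t := by noncomm_ring
  rw [e1, hc (a - a ^ 3)]
  have e2 : ((1 - a) * (2 + a) * (1 - a)) * t + (a - a ^ 3) * t = (1 - a) * (2 * t) := by
    have e3 : ((1 - a) * (2 + a) * (1 - a)) * t + (a - a ^ 3) * t = ((2 : R) - 2 * a) * t := by
      noncomm_ring
    rw [e3]; noncomm_ring
  rw [e2, h2, mul_one]

open SepExchange in
/-- If `2` is invertible and `a - a³` is regular with inner inverse `s`, then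
`b = 1 - a` is regular with inner inverse
`3/2 - b/2 + (1-b)(1-b/2)(2s)(1-b)(1-b/2)`. -/
theorem stmt1 (R : Type) [Ring R] [Invertible (2 : R)] (a s : R)
    (h : a - a ^ 3 = (a - a ^ 3) * s * (a - a ^ 3)) (b : R) (hb : b = 1 - a) :
    b = b * ((3 : R) * ⅟(2 : R) - b * ⅟(2 : R) +
      (1 - b) * (1 - b * ⅟(2 : R)) * (2 * s) * (1 - b) * (1 - b * ⅟(2 : R))) * b := by
  subst hb
  have hc : ∀ x : R, ⅟(2:R) * x = x * ⅟(2:R) := fun x => by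
    have h2x : (2:R) * x = x * 2 := by rw [two_mul, mul_two]
    calc ⅟(2:R) * x = ⅟(2:R) * x * (2 * ⅟(2:R)) := by rw [mul_invOf_self, mul_one]
      _ = ⅟(2:R) * (x * 2) * ⅟(2:R) := by noncomm_ring
      _ = ⅟(2:R) * (2 * x) * ⅟(2:R) := by rw [h2x]
      _ = x * ⅟(2:R) := by rw [← mul_assoc, invOf_mul_self, one_mul]
  exact aux_reg a s (⅟(2:R)) (mul_invOf_self 2) (invOf_mul_self 2) hc h
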